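/- Let 𝒢 be an ultragraph with exactly one edge e, with s(e) ∉ r(e) and G⁰ = {s(e)} ∪ r(e), and let R be a unital commutative ring. Then L_R(𝒢) is epsilon-strongly ℤ-graded with respect to the canonical grading {L_R(𝒢)_m}_{m∈ℤ}; in particular, the condition that the source of every edge belongs to the range of some edge is not necessary for the canonical ℤ-grading of an ultragraph Leavitt path algebra to be epsilon-strong. -/

import Mathlib

/-- An ultragraph: a source map `src : E → V` and a range map assigning to each
edge a nonempty set of vertices. -/
structure Ultragraph (V : Type) (E : Type) : Type where
  src : E → V
  rng : E → Set V
  rng_nonempty : ∀ e, (rng e).Nonempty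

namespace Ultragraph

variable {V E : Type}

/-- A finite path: a (possibly empty) list of edges with compatible transitions. -/
def IsPath (G : Ultragraph V E) (es : List E) : Prop :=
  es.Chain' fun e f => G.src f ∈ G.rng e

/-- An infinite path. -/
def IsInfinitePath (G : Ultragraph V E) (p : ℕ → E) : Prop :=
  ∀ i : ℕ, G.src (p (i + 1)) ∈ G.rng (p i)

/-- Condition (Y). -/
def ConditionY (G : Ultragraph V E) : Prop :=
  ∀ p : ℕ → E, G.IsInfinitePath p →
    ∃ (k : ℕ) (α : List E) (hα : α ≠ []),
      α.length = k + 1 ∧ G.IsPath α ∧ G.src (p k) ∈ G.rng (α.getLast hα)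

/-- The collection 𝒢⁰ of generalized vertices: the smallest collection of subsets of `V`
containing the singletons and the ranges of edges, closed under finite unions and finite
intersections (the empty set is included for convenience; `p_∅ = 0`). -/
inductive InG0 (G : Ultragraph V E) : Set V → Prop
  | vertex (v : V) : InG0 G {v}
  | range (e : E) : InG0 G (G.rng e)
  | union {A B : Set V} : InG0 G A → InG0 G B → InG0 G (A ∪ B)
  | inter {A B : Set V} : InG0 G A → InG0 G B → InG0 G (A ∩ B)

/-- Generators of the Leavitt path algebra. -/
inductive LPAGen (G : Ultragraph V E) : Type
  | edge : E → LPAGen G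
  | star : E → LPAGen G
  | proj : (A : Set V) → G.InG0 A → LPAGen G

/-- The directed graph `E_𝒢` associated to an ultragraph, viewed again as an ultragraph
whose edge ranges are singletons. -/
def toGraph (G : Ultragraph V E) : Ultragraph V {q : E × V // q.2 ∈ G.rng q.1} where
  src q := G.src q.1.1
  rng q := {q.1.2}
  rng_nonempty q := ⟨q.1.2, rfl⟩

variable (R : Type) [CommRing R] (G : Ultragraph V E)

/-- The free `R`-algebra on the generators. -/
abbrev FA := FreeAlgebra R (LPAGen G)

/-- The generator `g` inside the free algebra. -/
def X (g : LPAGen G) : FA R G := FreeAlgebra.ι R g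

/-- The defining relations of the Leavitt path algebra of an ultragraph. -/
inductive LeavittRel : FA R G → FA R G → Prop
  | proj_empty (h : G.InG0 ∅) : LeavittRel (X R G (.proj ∅ h)) 0
  | proj_mul (A B : Set V) (hA : G.InG0 A) (hB : G.InG0 B) :
      LeavittRel (X R G (.proj A hA) * X R G (.proj B hB))
        (X R G (.proj (A ∩ B) (hA.inter hB)))
  | proj_union (A B : Set V) (hA : G.InG0 A) (hB : G.InG0 B) :
      LeavittRel (X R G (.proj (A ∪ B) (hA.union hB)))
        (X R G (.proj A hA) + X R G (.proj B hB) - X R G (.proj (A ∩ B) (hA.inter hB)))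
  | src_mul (e : E) :
      LeavittRel (X R G (.proj {G.src e} (InG0.vertex (G.src e))) * X R G (.edge e))
        (X R G (.edge e))
  | mul_rng (e : E) :
      LeavittRel (X R G (.edge e) * X R G (.proj (G.rng e) (InG0.range e)))
        (X R G (.edge e))
  | rng_mul_star (e : E) :
      LeavittRel (X R G (.proj (G.rng e) (InG0.range e)) * X R G (.star e))
        (X R G (.star e))
  | star_mul_src (e : E) :
      LeavittRel (X R G (.star e) * X R G (.proj {G.src e} (InG0.vertex (G.src e))))
        (X R G (.star e))
  | star_mul_same (e : E) :
      LeavittRel (X R G (.star e) * X R G (.edge e))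
        (X R G (.proj (G.rng e) (InG0.range e)))
  | star_mul_ne (e f : E) (h : e ≠ f) :
      LeavittRel (X R G (.star e) * X R G (.edge f)) 0
  | ck (v : V) (hfin : {e : E | G.src e = v}.Finite) (hne : {e : E | G.src e = v}.Nonempty) :
      LeavittRel (X R G (.proj {v} (InG0.vertex v)))
        (∑ e ∈ hfin.toFinset, X R G (.edge e) * X R G (.star e))

/-- The (unital) quotient of the free algebra by the Leavitt relations; the Leavitt
path algebra `L_R(𝒢)` sits inside it as the non-unital subalgebra generated by the
generators. -/
abbrev LPABig := RingQuot (LeavittRel R G)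

/-- The image of a generator in the quotient. -/
def gen (g : LPAGen G) : LPABig R G := RingQuot.mkAlgHom R (LeavittRel R G) (X R G g)

/-- `s_e`. -/
def sgen (e : E) : LPABig R G := gen R G (.edge e)

/-- `s_e^*`. -/
def tgen (e : E) : LPABig R G := gen R G (.star e)

/-- `p_A`. -/
def pgen (A : Set V) (hA : G.InG0 A) : LPABig R G := gen R G (.proj A hA)

/-- `s_α` for a finite path `α` (the empty product is `1` in the ambient algebra). -/
def sPath (es : List E) : LPABig R G := (es.map (sgen R G)).prod

/-- `s_β^*` for a finite path `β`. -/
def tPath (es : List E) : LPABig R G := (es.reverse.map (tgen R G)).prod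

/-- The monomial `s_α p_A s_β^*`. -/
def mono (α : List E) (A : Set V) (hA : G.InG0 A) (β : List E) : LPABig R G :=
  sPath R G α * pgen R G A hA * tPath R G β

/-- The `m`-th component of the canonical `ℤ`-grading: all finite `R`-linear combinations
of monomials `s_α p_A s_β^*` with `|α| - |β| = m`. -/
def zComp (m : ℤ) : AddSubgroup (LPABig R G) :=
  AddSubgroup.closure {x | ∃ (l : R) (α β : List E) (A : Set V) (hA : G.InG0 A),
    G.IsPath α ∧ G.IsPath β ∧ (α.length : ℤ) - (β.length : ℤ) = m ∧
    x = l • mono R G α A hA β}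

/-- The element of the free group on the edges determined by a finite path. -/
def pathWord (es : List E) : FreeGroup E := (es.map FreeGroup.of).prod

/-- The `g`-th component of the free-group grading: all finite `R`-linear combinations
of monomials `s_α p_A s_β^*` with `α β⁻¹ = g` in the free group on the edges. -/
def fComp (g : FreeGroup E) : AddSubgroup (LPABig R G) :=
  AddSubgroup.closure {x | ∃ (l : R) (α β : List E) (A : Set V) (hA : G.InG0 A),
    G.IsPath α ∧ G.IsPath β ∧ pathWord α * (pathWord β)⁻¹ = g ∧
    x = l • mono R G α A hA β}

/-- The set of generators inside the quotient. -/
def genSet : Set (LPABig R G) := Set.range (gen R G)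

/-- The Leavitt path algebra `L_R(𝒢)`: the non-unital subalgebra of the quotient
generated by the images of the generators. -/
def LPA : NonUnitalSubalgebra R (LPABig R G) := NonUnitalAlgebra.adjoin R (genSet R G)

/-- `s_e` as an element of `L_R(𝒢)`. -/
def sEl (e : E) : LPA R G :=
  ⟨sgen R G e, NonUnitalAlgebra.subset_adjoin R ⟨LPAGen.edge e, rfl⟩⟩

/-- `s_e^*` as an element of `L_R(𝒢)`. -/
def tEl (e : E) : LPA R G :=
  ⟨tgen R G e, NonUnitalAlgebra.subset_adjoin R ⟨LPAGen.star e, rfl⟩⟩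

/-- `p_A` as an element of `L_R(𝒢)`. -/
def pEl (A : Set V) (hA : G.InG0 A) : LPA R G :=
  ⟨pgen R G A hA, NonUnitalAlgebra.subset_adjoin R ⟨LPAGen.proj A hA, rfl⟩⟩

end Ultragraph

namespace Ultragraph

section Aux

variable {V E : Type} (R : Type) [CommRing R] (G : Ultragraph V E)

lemma pgen_congr {A B : Set V} (h : A = B) (hA : G.InG0 A) (hB : G.InG0 B) :
    pgen R G A hA = pgen R G B hB := by subst h; rfl

lemma pgen_empty (h : G.InG0 ∅) : pgen R G (∅ : Set V) h = 0 := by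
  unfold pgen gen
  simpa using RingQuot.mkAlgHom_rel R (LeavittRel.proj_empty (R := R) (G := G) h)

lemma pgen_mul (A B : Set V) (hA : G.InG0 A) (hB : G.InG0 B) :
    pgen R G A hA * pgen R G B hB = pgen R G (A ∩ B) (hA.inter hB) := by
  unfold pgen gen
  rw [← map_mul]
  exact RingQuot.mkAlgHom_rel R (LeavittRel.proj_mul A B hA hB)

lemma ps_s (e : E) :
    pgen R G {G.src e} (InG0.vertex (G.src e)) * sgen R G e = sgen R G e := by
  unfold pgen sgen gen
  rw [← map_mul]
  exact RingQuot.mkAlgHom_rel R (LeavittRel.src_mul e)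

lemma s_pr (e : E) :
    sgen R G e * pgen R G (G.rng e) (InG0.range e) = sgen R G e := by
  unfold pgen sgen gen
  rw [← map_mul]
  exact RingQuot.mkAlgHom_rel R (LeavittRel.mul_rng e)

lemma pr_t (e : E) :
    pgen R G (G.rng e) (InG0.range e) * tgen R G e = tgen R G e := by
  unfold pgen tgen gen
  rw [← map_mul]
  exact RingQuot.mkAlgHom_rel R (LeavittRel.rng_mul_star e)

lemma t_ps (e : E) :
    tgen R G e * pgen R G {G.src e} (InG0.vertex (G.src e)) = tgen R G e := by
  unfold pgen tgen gen
  rw [← map_mul]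
  exact RingQuot.mkAlgHom_rel R (LeavittRel.star_mul_src e)

lemma t_s (e : E) :
    tgen R G e * sgen R G e = pgen R G (G.rng e) (InG0.range e) := by
  unfold pgen sgen tgen gen
  rw [← map_mul]
  exact RingQuot.mkAlgHom_rel R (LeavittRel.star_mul_same e)

end Aux

end Ultragraph

namespace Ultragraph

section Aux2

variable {V E : Type} (R : Type) [CommRing R] (G : Ultragraph V E)

lemma mono_nil_nil (A : Set V) (hA : G.InG0 A) :
    mono R G ([] : List E) A hA [] = pgen R G A hA := by
  simp [mono, sPath, tPath]

lemma mono_e_nil (e : E) (A : Set V) (hA : G.InG0 A) :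
    mono R G [e] A hA [] = sgen R G e * pgen R G A hA := by
  simp [mono, sPath, tPath]

lemma mono_nil_e (e : E) (A : Set V) (hA : G.InG0 A) :
    mono R G ([] : List E) A hA [e] = pgen R G A hA * tgen R G e := by
  simp [mono, sPath, tPath]

lemma mono_e_e (e : E) (A : Set V) (hA : G.InG0 A) :
    mono R G [e] A hA [e] = sgen R G e * pgen R G A hA * tgen R G e := by
  simp [mono, sPath, tPath, mul_assoc]

variable (e : E)

lemma st_s : (sgen R G e * tgen R G e) * sgen R G e = sgen R G e := by
  rw [mul_assoc, t_s, s_pr]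

lemma t_st : tgen R G e * (sgen R G e * tgen R G e) = tgen R G e := by
  rw [← mul_assoc, t_s, pr_t]

lemma s_pA_pr (A : Set V) (hA : G.InG0 A) :
    (sgen R G e * pgen R G A hA) * pgen R G (G.rng e) (InG0.range e)
      = sgen R G e * pgen R G A hA := by
  conv_rhs => rw [← s_pr R G e, mul_assoc, pgen_mul]
  rw [mul_assoc, pgen_mul,
    pgen_congr R G (Set.inter_comm A (G.rng e)) (hA.inter (InG0.range e))
      ((InG0.range e).inter hA)]

lemma pr_pA_t (A : Set V) (hA : G.InG0 A) :
    pgen R G (G.rng e) (InG0.range e) * (pgen R G A hA * tgen R G e)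
      = pgen R G A hA * tgen R G e := by
  conv_rhs => rw [← pr_t R G e, ← mul_assoc, pgen_mul]
  rw [← mul_assoc, pgen_mul,
    pgen_congr R G (Set.inter_comm (G.rng e) A) ((InG0.range e).inter hA)
      (hA.inter (InG0.range e))]

variable (hu : G.InG0 (Set.univ : Set V))

lemma pu_p (A : Set V) (hA : G.InG0 A) :
    pgen R G Set.univ hu * pgen R G A hA = pgen R G A hA := by
  rw [pgen_mul, pgen_congr R G (Set.univ_inter A) _ hA]

lemma p_pu (A : Set V) (hA : G.InG0 A) :
    pgen R G A hA * pgen R G Set.univ hu = pgen R G A hA := by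
  rw [pgen_mul, pgen_congr R G (Set.inter_univ A) _ hA]

lemma pu_s : pgen R G Set.univ hu * sgen R G e = sgen R G e := by
  conv_lhs => rw [← ps_s R G e, ← mul_assoc]
  rw [pu_p, ps_s]

lemma t_pu : tgen R G e * pgen R G Set.univ hu = tgen R G e := by
  conv_lhs => rw [← t_ps R G e, mul_assoc]
  rw [p_pu, t_ps]

lemma path_cases (he : ∀ f : E, f = e) (hs : G.src e ∉ G.rng e) :
    ∀ α : List E, G.IsPath α → α = [] ∨ α = [e] := by
  intro α hα
  match α with
  | [] => exact Or.inl rfl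
  | [a] => exact Or.inr (by rw [he a])
  | a :: b :: l =>
    exfalso
    unfold IsPath at hα
    have h1 := (List.isChain_cons_cons.mp hα).1
    rw [he a, he b] at h1
    exact hs h1

end Aux2

end Ultragraph

/-- The additive span of the set of products `{a b : a ∈ S, b ∈ T}`. -/
def mulSpan {A : Type} [AddGroup A] [Mul A] (S T : AddSubgroup A) : AddSubgroup A :=
  AddSubgroup.closure {x | ∃ a ∈ S, ∃ b ∈ T, x = a * b}

open Ultragraph in
/-- an ultragraph with a single edge `e`, with `s(e) ∉ r(e)` and
`G⁰ = {s(e)} ∪ r(e)`, has epsilon-strongly `ℤ`-graded Leavitt path algebra (so the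
condition that sources of edges lie in ranges of edges is not necessary). -/
theorem epsilonStrongZ_one_edge {V E : Type} [Countable V] [Countable E]
    (G : Ultragraph V E) (e : E) (he : ∀ f : E, f = e)
    (hs : G.src e ∉ G.rng e)
    (huniv : (Set.univ : Set V) = {G.src e} ∪ G.rng e)
    (R : Type) [CommRing R] :
    ∃ eps : ℤ → LPABig R G, ∀ m : ℤ,
      eps m ∈ mulSpan (zComp R G m) (zComp R G (-m)) ∧
      ∀ t ∈ zComp R G m, eps m * t = t ∧ t * eps (-m) = t := by
  classical
  have hu : G.InG0 (Set.univ : Set V) := by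
    rw [huniv]; exact (InG0.vertex (G.src e)).union (InG0.range e)
  have hre : G.rng e ∩ {G.src e} = ∅ := by
    ext x
    simp only [Set.mem_inter_iff, Set.mem_singleton_iff, Set.mem_empty_iff_false, iff_false,
      not_and]
    rintro hx rfl; exact hs hx
  have hnil : G.IsPath ([] : List E) := List.isChain_nil
  have hsing : G.IsPath [e] := List.isChain_singleton e
  set eps : ℤ → LPABig R G := fun m =>
    if m = 0 then pgen R G Set.univ hu
    else if m = 1 then sgen R G e * tgen R G e
    else if m = -1 then pgen R G (G.rng e) (InG0.range e)
    else 0 with hepsdef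
  have heps0 : eps 0 = pgen R G Set.univ hu := by simp [hepsdef]
  have heps1 : eps 1 = sgen R G e * tgen R G e := by norm_num [hepsdef]
  have hepsm1 : eps (-1) = pgen R G (G.rng e) (InG0.range e) := by norm_num [hepsdef]
  have hsmem : sgen R G e ∈ zComp R G 1 := by
    refine AddSubgroup.subset_closure ⟨1, [e], [], G.rng e, InG0.range e, hsing, hnil, by
      norm_num, ?_⟩
    rw [one_smul, mono_e_nil, s_pr]
  have htmem : tgen R G e ∈ zComp R G (-1) := by
    refine AddSubgroup.subset_closure ⟨1, [], [e], G.rng e, InG0.range e, hnil, hsing, by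
      norm_num, ?_⟩
    rw [one_smul, mono_nil_e, pr_t]
  have hpumem : pgen R G Set.univ hu ∈ zComp R G 0 := by
    refine AddSubgroup.subset_closure ⟨1, [], [], Set.univ, hu, hnil, hnil, by norm_num, ?_⟩
    rw [one_smul, mono_nil_nil]
  refine ⟨eps, fun m => ⟨?_, ?_⟩⟩
  · -- membership in mulSpan
    by_cases hm0 : m = 0
    · subst hm0
      rw [heps0, neg_zero]
      exact AddSubgroup.subset_closure
        ⟨pgen R G Set.univ hu, hpumem, pgen R G Set.univ hu, hpumem, (pu_p R G hu Set.univ hu).symm⟩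
    by_cases hm1 : m = 1
    · subst hm1
      rw [heps1]
      exact AddSubgroup.subset_closure ⟨sgen R G e, hsmem, tgen R G e, htmem, rfl⟩
    by_cases hm2 : m = -1
    · subst hm2
      rw [hepsm1, neg_neg]
      exact AddSubgroup.subset_closure
        ⟨tgen R G e, htmem, sgen R G e, hsmem, (t_s R G e).symm⟩
    · have : eps m = 0 := by simp [hepsdef, hm0, hm1, hm2]
      rw [this]
      exact zero_mem _
  · -- eps acts as local units
    intro x hx
    unfold zComp at hx
    induction hx using AddSubgroup.closure_induction with
    | zero => constructor <;> simp
    | add a b ha hb iha ihb =>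
      exact ⟨by rw [mul_add, iha.1, ihb.1], by rw [add_mul, iha.2, ihb.2]⟩
    | neg a ha iha =>
      exact ⟨(mul_neg _ _).trans (congrArg Neg.neg iha.1),
        (neg_mul _ _).trans (congrArg Neg.neg iha.2)⟩
    | mem x hxmem =>
      obtain ⟨l, α, β, A, hA, hα, hβ, hlen, rfl⟩ := hxmem
      rcases path_cases G e he hs α hα with rfl | rfl <;>
        rcases path_cases G e he hs β hβ with rfl | rfl
      · -- [] []
        have hm : m = 0 := by simp only [List.length_nil] at hlen; omega
        subst hm
        rw [mono_nil_nil, heps0, neg_zero, heps0]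
        constructor
        · rw [mul_smul_comm, pu_p]
        · rw [smul_mul_assoc, p_pu]
      · -- [] [e]
        have hm : m = -1 := by simp only [List.length_nil, List.length_cons] at hlen; omega
        subst hm
        rw [mono_nil_e, hepsm1, neg_neg, heps1]
        constructor
        · rw [mul_smul_comm, pr_pA_t]
        · rw [smul_mul_assoc, mul_assoc, t_st]
      · -- [e] []
        have hm : m = 1 := by simp only [List.length_nil, List.length_cons] at hlen; omega
        subst hm
        rw [mono_e_nil, heps1, hepsm1]
        constructor
        · rw [mul_smul_comm, ← mul_assoc, st_s]
        · rw [smul_mul_assoc, s_pA_pr]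
      · -- [e] [e]
        have hm : m = 0 := by simp only [List.length_nil, List.length_cons] at hlen; omega
        subst hm
        rw [mono_e_e, heps0, neg_zero, heps0]
        constructor
        · rw [mul_smul_comm, ← mul_assoc, ← mul_assoc, pu_s]
        · rw [smul_mul_assoc, mul_assoc, t_pu]
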